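/- For n ≥ 2, j, l ∈ ℕ with j ≤ l, and μ = -λ with λ ∈ ℂ: Δ_{ℝ^{n-1}}^j (∂/∂x_n)^{2l-2j} (1 + |x|² + x_n²)^{-λ} evaluated at (x, x_n) = (0,0) equals (2^{2j}(2l-2j)!/(l-j)!) · (-λ-l+1)_l · ((n-1)/2)_j, where (a)_k denotes the Pochhammer symbol. -/

import Mathlib

open Set Filter Topology Complex


/-- The Euclidean Laplacian `Δ = Σ ∂²/∂x_i²` of a complex-valued function on `ℝ^m`. -/
noncomputable def laplacianC (m : ℕ) (f : EuclideanSpace ℝ (Fin m) → ℂ)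
    (x : EuclideanSpace ℝ (Fin m)) : ℂ :=
  ∑ i : Fin m,
    fderiv ℝ (fun y => fderiv ℝ f y (EuclideanSpace.single i (1 : ℝ))) x
      (EuclideanSpace.single i (1 : ℝ))

noncomputable section




/-- The 1D radial operator `L g u = 4u g'' + 2m g'`. -/
def LopKZ (m : ℕ) (g : ℝ → ℂ) : ℝ → ℂ := fun u =>
  (4 * u : ℝ) • iteratedDeriv 2 g u + (2 * m : ℝ) • iteratedDeriv 1 g u

lemma contDiffOn_iteratedDeriv_KZ {f : ℝ → ℂ} {s : Set ℝ} (hs : IsOpen s)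
    (hf : ContDiffOn ℝ (⊤:ℕ∞) f s) (k : ℕ) : ContDiffOn ℝ (⊤:ℕ∞) (iteratedDeriv k f) s := by
  induction k with
  | zero => simpa [iteratedDeriv_zero] using hf
  | succ k ih =>
    rw [iteratedDeriv_succ]
    exact ih.deriv_of_isOpen hs (by simp)

lemma LopKZ_contDiffOn {m : ℕ} {g : ℝ → ℂ} {s : Set ℝ} (hs : IsOpen s)
    (hg : ContDiffOn ℝ (⊤:ℕ∞) g s) : ContDiffOn ℝ (⊤:ℕ∞) (LopKZ m g) s := by
  apply ContDiffOn.add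
  · exact ((contDiffOn_const.mul contDiffOn_id)).smul (contDiffOn_iteratedDeriv_KZ hs hg 2)
  · exact (contDiffOn_const (c := (2 * m : ℝ))).smul (contDiffOn_iteratedDeriv_KZ hs hg 1)

lemma iteratedDeriv_LopKZ {s : Set ℝ} (hs : IsOpen s) (j : ℕ) :
    ∀ (m : ℕ) (g : ℝ → ℂ), ContDiffOn ℝ (⊤:ℕ∞) g s → ∀ u ∈ s,
    iteratedDeriv j (LopKZ m g) u =
      (4 * u : ℝ) • iteratedDeriv (j + 2) g u + (4 * j + 2 * m : ℝ) • iteratedDeriv (j + 1) g u := by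
  induction j with
  | zero =>
    intro m g hg u hu
    simp [LopKZ]
  | succ j ih =>
    intro m g hg u hu
    have hdg : ContDiffOn ℝ (⊤:ℕ∞) (deriv g) s := hg.deriv_of_isOpen hs (by simp)
    have key : ∀ v ∈ s, deriv (LopKZ m g) v = LopKZ (m + 2) (deriv g) v := by
      intro v hv
      have h2 : DifferentiableAt ℝ (iteratedDeriv 2 g) v :=
        ((contDiffOn_iteratedDeriv_KZ hs hg 2).contDiffAt (hs.mem_nhds hv)).differentiableAt
          (by simp)
      have h1 : DifferentiableAt ℝ (iteratedDeriv 1 g) v :=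
        ((contDiffOn_iteratedDeriv_KZ hs hg 1).contDiffAt (hs.mem_nhds hv)).differentiableAt
          (by simp)
      have hd2 : HasDerivAt (fun u : ℝ => (4 * u : ℝ) • iteratedDeriv 2 g u)
          ((4 * v : ℝ) • deriv (iteratedDeriv 2 g) v + (4 : ℝ) • iteratedDeriv 2 g v) v := by
        have := (((hasDerivAt_id v).const_mul (4:ℝ))).smul h2.hasDerivAt
        have this' : HasDerivAt (fun u : ℝ => (4 * id u : ℝ) • iteratedDeriv 2 g u) _ v := this
        simpa [mul_one, add_comm] using this'
      have hd1 : HasDerivAt (fun u : ℝ => (2 * (m:ℝ)) • iteratedDeriv 1 g u)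
          ((2 * (m:ℝ)) • deriv (iteratedDeriv 1 g) v) v := h1.hasDerivAt.const_smul (2 * (m:ℝ))
      have hder : deriv (fun u : ℝ => (4 * u : ℝ) • iteratedDeriv 2 g u
          + (2 * m : ℝ) • iteratedDeriv 1 g u) v = _ := (hd2.add hd1).deriv
      have hLop : LopKZ m g = fun u : ℝ =>
          (4 * u : ℝ) • iteratedDeriv 2 g u + (2 * m : ℝ) • iteratedDeriv 1 g u := rfl
      simp only [LopKZ]
      rw [hLop, hder]
      rw [show deriv (iteratedDeriv 2 g) = iteratedDeriv 3 g from (iteratedDeriv_succ (n:=2)).symm,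
        show deriv (iteratedDeriv 1 g) = iteratedDeriv 2 g from (iteratedDeriv_succ (n:=1)).symm,
        show iteratedDeriv 2 (deriv g) = iteratedDeriv 3 g from (iteratedDeriv_succ' (n:=2)).symm,
        show iteratedDeriv 1 (deriv g) = iteratedDeriv 2 g from (iteratedDeriv_succ' (n:=1)).symm]
      simp only [Complex.real_smul]
      push_cast
      ring
    have hcong : deriv (LopKZ m g) =ᶠ[𝓝 u] LopKZ (m + 2) (deriv g) :=
      eventually_of_mem (hs.mem_nhds hu) key
    rw [iteratedDeriv_succ', hcong.iteratedDeriv_eq j,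
      ih (m+2) (deriv g) hdg u hu,
      show iteratedDeriv (j+2) (deriv g) = iteratedDeriv (j+3) g from (iteratedDeriv_succ' (n:=j+2)).symm,
      show iteratedDeriv (j+1) (deriv g) = iteratedDeriv (j+2) g from (iteratedDeriv_succ' (n:=j+1)).symm]
    have : (4 * (j:ℝ) + 2 * ((m:ℝ)+2)) = (4 * ((j:ℝ)+1) + 2 * m) := by ring
    simp only [Complex.real_smul]
    push_cast
    ring

lemma LopKZ_iterate {s : Set ℝ} (hs : IsOpen s) (h0 : (0:ℝ) ∈ s) (m : ℕ) (j : ℕ) :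
    ∀ (g : ℝ → ℂ), ContDiffOn ℝ (⊤:ℕ∞) g s →
    (LopKZ m)^[j] g 0 = (∏ i ∈ Finset.range j, (4 * (i:ℝ) + 2 * m)) • iteratedDeriv j g 0 := by
  induction j with
  | zero => intro g hg; simp
  | succ j ih =>
    intro g hg
    rw [Function.iterate_succ_apply, ih (LopKZ m g) (LopKZ_contDiffOn hs hg),
      iteratedDeriv_LopKZ hs j m g hg 0 h0, Finset.prod_range_succ]
    simp only [mul_zero, zero_smul, zero_add, smul_smul]







lemma iteratedDerivWithin_of_isOpen_KZ {f : ℝ → ℂ} {s : Set ℝ} {x : ℝ} (hs : IsOpen s)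
    (hx : x ∈ s) (n : ℕ) : iteratedDerivWithin n f s x = iteratedDeriv n f x := by
  simp only [iteratedDeriv, iteratedDerivWithin, iteratedFDerivWithin_of_isOpen n hs hx]

lemma iteratedDeriv_const_smul_KZ {f : ℝ → ℂ} {s : Set ℝ} {x : ℝ} (hs : IsOpen s) (hx : x ∈ s)
    (hf : ContDiffOn ℝ (⊤:ℕ∞) f s) (c : ℂ) (n : ℕ) :
    iteratedDeriv n (fun u => c • f u) x = c • iteratedDeriv n f x := by
  have : (fun u => c • f u) = c • f := rfl
  rw [this, ← iteratedDerivWithin_of_isOpen_KZ hs hx, ← iteratedDerivWithin_of_isOpen_KZ hs hx,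
    iteratedDerivWithin_const_smul hx hs.uniqueDiffOn c ((hf.contDiffWithinAt hx).of_le (by exact_mod_cast le_top))]

lemma isOpen_KZ (c : ℝ) : IsOpen {u : ℝ | 0 < c + u} :=
  isOpen_lt continuous_const (continuous_const.add continuous_id)

lemma cpowKZ_contDiffOn (c : ℝ) (a : ℂ) :
    ContDiffOn ℝ (⊤:ℕ∞) (fun u : ℝ => ((c + u : ℝ) : ℂ) ^ a) {u : ℝ | 0 < c + u} := by
  intro u hu
  have hF : AnalyticAt ℂ (fun z : ℂ => ((c:ℂ) + z) ^ a) (u:ℂ) := by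
    apply (analyticAt_const.add analyticAt_id).cpow analyticAt_const
    show (c:ℂ) + (u:ℂ) ∈ Complex.slitPlane
    rw [← Complex.ofReal_add]
    exact Complex.ofReal_mem_slitPlane.2 hu
  have h1 : ContDiffAt ℝ (⊤:ℕ∞) (fun z : ℂ => ((c:ℂ) + z) ^ a) (u:ℂ) :=
    hF.contDiffAt.restrict_scalars ℝ
  have h2 : ContDiffAt ℝ (⊤:ℕ∞) (fun u : ℝ => ((c + u : ℝ) : ℂ) ^ a) u := by
    have h3 := h1.comp u (Complex.ofRealCLM.contDiff.contDiffAt)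
    apply h3.congr_of_eventuallyEq
    refine Filter.Eventually.of_forall (fun v => ?_)
    simp [Function.comp, Complex.ofReal_add]
  exact h2.contDiffWithinAt

lemma cpowKZ_hasDerivAt (c : ℝ) (a : ℂ) {u : ℝ} (h : 0 < c + u) :
    HasDerivAt (fun u : ℝ => ((c + u : ℝ) : ℂ) ^ a) (a * ((c + u : ℝ) : ℂ) ^ (a - 1)) u := by
  have hz : HasDerivAt (fun z : ℂ => ((c:ℂ) + z) ^ a) (a * ((c:ℂ) + u) ^ (a - 1) * 1) (u:ℂ) := by
    apply ((hasDerivAt_id (u:ℂ)).const_add (c:ℂ)).cpow_const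
    show (c:ℂ) + (u:ℂ) ∈ Complex.slitPlane
    rw [← Complex.ofReal_add]
    exact Complex.ofReal_mem_slitPlane.2 h
  have := hz.comp_ofReal
  simp only [mul_one] at this
  have heq : (fun y : ℝ => ((c:ℂ) + (y:ℂ)) ^ a) = (fun u : ℝ => ((c + u : ℝ) : ℂ) ^ a) := by
    funext v; rw [Complex.ofReal_add]
  rw [heq] at this
  rwa [show ((c:ℂ) + (u:ℂ)) = (((c + u : ℝ)) : ℂ) from (Complex.ofReal_add c u).symm] at this

lemma cpowKZ_iteratedDeriv (c : ℝ) (hc : 0 < c) (k : ℕ) : ∀ a : ℂ,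
    iteratedDeriv k (fun u : ℝ => ((c + u : ℝ) : ℂ) ^ a) 0 =
      (∏ i ∈ Finset.range k, (a - i)) * (c:ℂ) ^ (a - k) := by
  induction k with
  | zero => intro a; simp
  | succ k ih =>
    intro a
    have h0mem : (0:ℝ) ∈ {u : ℝ | 0 < c + u} := by simp [hc]
    have hev : deriv (fun u : ℝ => ((c + u : ℝ) : ℂ) ^ a) =ᶠ[𝓝 (0:ℝ)]
        (fun u : ℝ => a • ((c + u : ℝ) : ℂ) ^ (a - 1)) := by
      refine eventually_of_mem ((isOpen_KZ c).mem_nhds h0mem) (fun v hv => ?_)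
      rw [(cpowKZ_hasDerivAt c a hv).deriv]
      simp [smul_eq_mul]
    rw [iteratedDeriv_succ', hev.iteratedDeriv_eq k,
      iteratedDeriv_const_smul_KZ (isOpen_KZ c) h0mem (cpowKZ_contDiffOn c (a-1)) a k,
      ih (a - 1), Finset.prod_range_succ']
    push_cast
    rw [smul_eq_mul]
    rw [show a - 1 - (k:ℂ) = a - ((k:ℂ) + 1) by ring]
    rw [show (∏ i ∈ Finset.range k, (a - 1 - (i:ℂ))) = ∏ i ∈ Finset.range k, (a - ((i:ℂ) + 1)) by
      apply Finset.prod_congr rfl; intro i _; ring]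
    ring







lemma norm_sq_mem_KZ {m : ℕ} (y : EuclideanSpace ℝ (Fin m)) : ‖y‖^2 ∈ Ioi (-1:ℝ) := by
  have := sq_nonneg ‖y‖
  simp only [mem_Ioi]; linarith

lemma hasFDerivAt_radial_KZ {m : ℕ} {g : ℝ → ℂ}
    (hg : ContDiffOn ℝ (⊤:ℕ∞) g (Ioi (-1:ℝ))) (y : EuclideanSpace ℝ (Fin m)) :
    HasFDerivAt (fun y : EuclideanSpace ℝ (Fin m) => g (‖y‖^2))
      ((((2:ℕ) • innerSL ℝ y)).smulRight (deriv g (‖y‖^2))) y := by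
  have hq : HasFDerivAt (fun y : EuclideanSpace ℝ (Fin m) => ‖y‖^2) ((2:ℕ) • innerSL ℝ y) y := by
    simpa using (hasFDerivAt_id y).norm_sq
  have hgd : HasDerivAt g (deriv g (‖y‖^2)) (‖y‖^2) :=
    (((hg.contDiffAt (isOpen_Ioi.mem_nhds (norm_sq_mem_KZ y))).differentiableAt
      (by simp)).hasDerivAt)
  exact HasFDerivAt.comp y hgd.hasFDerivAt hq |>.congr_fderiv
    (by ext v; simp [mul_assoc, Finset.sum_mul])

lemma laplacian_radial_KZ (m : ℕ) {g : ℝ → ℂ}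
    (hg : ContDiffOn ℝ (⊤:ℕ∞) g (Ioi (-1:ℝ))) (x : EuclideanSpace ℝ (Fin m)) :
    laplacianC m (fun y => g (‖y‖^2)) x = LopKZ m g (‖x‖^2) := by
  have hg' : ContDiffOn ℝ (⊤:ℕ∞) (deriv g) (Ioi (-1:ℝ)) :=
    hg.deriv_of_isOpen isOpen_Ioi (by simp)
  -- the first derivative function in direction i
  have hfd : ∀ (i : Fin m), (fun y : EuclideanSpace ℝ (Fin m) =>
      fderiv ℝ (fun y : EuclideanSpace ℝ (Fin m) => g (‖y‖^2)) y (EuclideanSpace.single i (1:ℝ)))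
      = fun y => (2 * y i : ℝ) • deriv g (‖y‖^2) := by
    intro i
    funext y
    rw [(hasFDerivAt_radial_KZ hg y).fderiv]
    simp [EuclideanSpace.inner_single_right, real_inner_comm, mul_comm]
  -- second derivative in direction i
  have hsnd : ∀ (i : Fin m), HasFDerivAt (fun y : EuclideanSpace ℝ (Fin m) =>
      (2 * y i : ℝ) • deriv g (‖y‖^2))
      ((2 * x i : ℝ) • ((((2:ℕ) • innerSL ℝ x)).smulRight (deriv (deriv g) (‖x‖^2)))
        + ((2:ℝ) • (EuclideanSpace.proj i : EuclideanSpace ℝ (Fin m) →L[ℝ] ℝ)).smulRight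
            (deriv g (‖x‖^2))) x := by
    intro i
    have hc : HasFDerivAt (fun y : EuclideanSpace ℝ (Fin m) => (2 * y i : ℝ))
        ((2:ℝ) • (EuclideanSpace.proj i : EuclideanSpace ℝ (Fin m) →L[ℝ] ℝ)) x := by
      simpa using ((EuclideanSpace.proj i : EuclideanSpace ℝ (Fin m) →L[ℝ] ℝ).hasFDerivAt
        (x := x)).const_mul (2:ℝ)
    have hf : HasFDerivAt (fun y : EuclideanSpace ℝ (Fin m) => deriv g (‖y‖^2))
        ((((2:ℕ) • innerSL ℝ x)).smulRight (deriv (deriv g) (‖x‖^2))) x :=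
      hasFDerivAt_radial_KZ hg' x
    exact hc.smul hf
  -- assemble
  unfold laplacianC
  have hterm : ∀ i : Fin m,
      fderiv ℝ (fun y : EuclideanSpace ℝ (Fin m) =>
        fderiv ℝ (fun y : EuclideanSpace ℝ (Fin m) => g (‖y‖^2)) y
          (EuclideanSpace.single i (1:ℝ))) x (EuclideanSpace.single i (1:ℝ))
      = (4 * (x i)^2 : ℝ) • deriv (deriv g) (‖x‖^2) + (2:ℝ) • deriv g (‖x‖^2) := by
    intro i
    rw [hfd i, (hsnd i).fderiv]
    simp [EuclideanSpace.inner_single_right, EuclideanSpace.single_apply, smul_smul]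
    ring
  rw [Finset.sum_congr rfl (fun i _ => hterm i)]
  rw [Finset.sum_add_distrib]
  have hxsum : ∑ i : Fin m, (x i)^2 = ‖x‖^2 := by
    rw [EuclideanSpace.norm_eq, Real.sq_sqrt (Finset.sum_nonneg fun i _ => sq_nonneg _)]
    simp [Real.norm_eq_abs, _root_.sq_abs]
  have h1 : ∑ i : Fin m, (4 * (x i)^2 : ℝ) • deriv (deriv g) (‖x‖^2)
      = (4 * ‖x‖^2 : ℝ) • deriv (deriv g) (‖x‖^2) := by
    rw [← Finset.sum_smul]
    congr 1
    rw [← Finset.mul_sum, hxsum]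
  have h2 : ∑ _i : Fin m, (2:ℝ) • deriv g (‖x‖^2) = (2 * m : ℝ) • deriv g (‖x‖^2) := by
    rw [Finset.sum_const, Finset.card_univ, Fintype.card_fin,
      ← Nat.cast_smul_eq_nsmul ℝ m, smul_smul]
    norm_num [mul_comm]
  rw [h1, h2]
  unfold LopKZ
  rw [show iteratedDeriv 2 g = deriv (deriv g) by
      rw [iteratedDeriv_succ, iteratedDeriv_one], iteratedDeriv_one]



lemma laplacian_iterate_KZ (m j : ℕ) : ∀ (g : ℝ → ℂ), ContDiffOn ℝ (⊤:ℕ∞) g (Ioi (-1:ℝ)) →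
    (laplacianC m)^[j] (fun y => g (‖y‖^2)) = fun x => ((LopKZ m)^[j] g) (‖x‖^2) := by
  induction j with
  | zero => intro g hg; simp
  | succ j ih =>
    intro g hg
    rw [Function.iterate_succ_apply, Function.iterate_succ_apply]
    have h1 : laplacianC m (fun y => g (‖y‖^2)) = fun x => (LopKZ m g) (‖x‖^2) :=
      funext (laplacian_radial_KZ m hg)
    rw [h1, ih (LopKZ m g) (LopKZ_contDiffOn isOpen_Ioi hg)]

lemma sq_mem_KZ (t : ℝ) : t^2 ∈ Ioi (-1:ℝ) := by
  have := sq_nonneg t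
  simp only [mem_Ioi]; linarith

lemma evenDeriv_KZ (k : ℕ) : ∀ (g : ℝ → ℂ), ContDiffOn ℝ (⊤:ℕ∞) g (Ioi (-1:ℝ)) →
    iteratedDeriv (2*k) (fun t : ℝ => g (t^2)) 0 = ((LopKZ 1)^[k] g) 0 := by
  induction k with
  | zero => intro g hg; simp
  | succ k ih =>
    intro g hg
    have hg' : ContDiffOn ℝ (⊤:ℕ∞) (deriv g) (Ioi (-1:ℝ)) :=
      hg.deriv_of_isOpen isOpen_Ioi (by simp)
    have hd1 : ∀ t : ℝ, HasDerivAt (fun t : ℝ => g (t^2)) ((2*t : ℝ) • deriv g (t^2)) t := by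
      intro t
      have hgd : HasDerivAt g (deriv g (t^2)) (t^2) :=
        ((hg.contDiffAt (isOpen_Ioi.mem_nhds (sq_mem_KZ t))).differentiableAt
          (by simp)).hasDerivAt
      have hpow : HasDerivAt (fun t : ℝ => t^2) (2*t) t := by
        simpa using hasDerivAt_pow 2 t
      exact HasDerivAt.scomp t hgd hpow
    have hderiv1 : deriv (fun t : ℝ => g (t^2)) = fun t => (2*t : ℝ) • deriv g (t^2) :=
      funext fun t => (hd1 t).deriv
    have hd2 : ∀ t : ℝ, HasDerivAt (fun t : ℝ => (2*t : ℝ) • deriv g (t^2))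
        ((2*t:ℝ) • ((2*t:ℝ) • deriv (deriv g) (t^2)) + (2:ℝ) • deriv g (t^2)) t := by
      intro t
      have hgd : HasDerivAt (deriv g) (deriv (deriv g) (t^2)) (t^2) :=
        ((hg'.contDiffAt (isOpen_Ioi.mem_nhds (sq_mem_KZ t))).differentiableAt
          (by simp)).hasDerivAt
      have hpow : HasDerivAt (fun t : ℝ => t^2) (2*t) t := by
        simpa using hasDerivAt_pow 2 t
      have hb : HasDerivAt (fun t : ℝ => deriv g (t^2)) ((2*t:ℝ) • deriv (deriv g) (t^2)) t :=
        HasDerivAt.scomp (g₁ := deriv g) (h := fun t : ℝ => t^2) t hgd hpow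
      have ha : HasDerivAt (fun t : ℝ => (2*t:ℝ)) (2:ℝ) t := by
        simpa using (hasDerivAt_id t).const_mul (2:ℝ)
      exact ha.smul hb
    have hsecond : deriv (deriv (fun t : ℝ => g (t^2))) = fun t => LopKZ 1 g (t^2) := by
      funext t
      rw [hderiv1, (hd2 t).deriv]
      show _ = (4*t^2 : ℝ) • iteratedDeriv 2 g (t^2) + (2*((1:ℕ):ℝ)) • iteratedDeriv 1 g (t^2)
      rw [show iteratedDeriv 2 g = deriv (deriv g) by
        rw [iteratedDeriv_succ, iteratedDeriv_one], iteratedDeriv_one, smul_smul]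
      push_cast
      ring_nf
    rw [show 2*(k+1) = 2*k+1+1 by ring, iteratedDeriv_succ', iteratedDeriv_succ', hsecond,
      ih (LopKZ 1 g) (LopKZ_contDiffOn isOpen_Ioi hg), ← Function.iterate_succ_apply]

lemma prod_fact_KZ (k : ℕ) :
    ((∏ i ∈ Finset.range k, (4*(i:ℂ)+2))) = ((2*k).factorial : ℂ)/(k.factorial : ℂ) := by
  have hnat : (∏ i ∈ Finset.range k, (4*i+2)) * k.factorial = (2*k).factorial := by
    induction k with
    | zero => simp
    | succ k ih =>
      rw [Finset.prod_range_succ, Nat.factorial_succ, show 2*(k+1) = 2*k+1+1 by ring,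
        Nat.factorial_succ, Nat.factorial_succ]
      rw [show (∏ x ∈ Finset.range k, (4*x+2)) * (4*k+2) * ((k+1)*k.factorial)
        = ((4*k+2)*(k+1)) * ((∏ x ∈ Finset.range k, (4*x+2)) * k.factorial) by ring, ih]
      ring
  rw [eq_div_iff (by exact_mod_cast k.factorial_ne_zero)]
  exact_mod_cast congrArg (Nat.cast : ℕ → ℂ) hnat


theorem stmt_6 (n : ℕ) (hn : 2 ≤ n) (j l : ℕ) (hjl : j ≤ l) (lam : ℂ) :
    (laplacianC (n - 1))^[j]
        (fun x : EuclideanSpace ℝ (Fin (n - 1)) =>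
          iteratedDeriv (2 * l - 2 * j)
            (fun t : ℝ => ((1 + ‖x‖ ^ 2 + t ^ 2 : ℝ) : ℂ) ^ (-lam)) 0) 0 =
      (2 : ℂ) ^ (2 * j) * (((2 * l - 2 * j).factorial : ℂ) / ((l - j).factorial : ℂ)) *
        (∏ i ∈ Finset.range l, (-lam - l + 1 + i)) *
        ∏ i ∈ Finset.range j, (((n : ℂ) - 1) / 2 + i) := by
  set m := n - 1 with hm
  set k := l - j with hk
  have h2k : 2 * l - 2 * j = 2 * k := by omega
  have hkj : k + j = l := by omega
  rw [h2k]
  set gBig : ℝ → ℂ := fun u =>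
    ((∏ i ∈ Finset.range k, (4 * (i:ℝ) + 2 * ((1:ℕ):ℝ))) : ℝ) •
      ((∏ i ∈ Finset.range k, (-lam - (i:ℂ))) • ((1 + u : ℝ) : ℂ) ^ (-lam - (k:ℂ))) with hgBig
  have hInner : (fun x : EuclideanSpace ℝ (Fin m) =>
      iteratedDeriv (2 * k) (fun t : ℝ => ((1 + ‖x‖ ^ 2 + t ^ 2 : ℝ) : ℂ) ^ (-lam)) 0)
      = fun x => gBig (‖x‖^2) := by
    funext x
    have hc1 : (0:ℝ) < 1 + ‖x‖^2 := by positivity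
    have hmono : Ioi (-1:ℝ) ⊆ {u : ℝ | 0 < (1 + ‖x‖^2) + u} := by
      intro u hu
      have h0 : (0:ℝ) ≤ ‖x‖^2 := sq_nonneg _
      simp only [mem_setOf_eq, mem_Ioi] at *
      linarith
    have hgx : ContDiffOn ℝ (⊤:ℕ∞)
        (fun u : ℝ => (((1 + ‖x‖^2) + u : ℝ) : ℂ) ^ (-lam)) (Ioi (-1:ℝ)) :=
      (cpowKZ_contDiffOn (1 + ‖x‖^2) (-lam)).mono hmono
    have key : iteratedDeriv (2*k) (fun t : ℝ => (((1 + ‖x‖^2) + t^2 : ℝ) : ℂ) ^ (-lam)) 0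
        = ((LopKZ 1)^[k] (fun u : ℝ => (((1 + ‖x‖^2) + u : ℝ) : ℂ) ^ (-lam))) 0 :=
      evenDeriv_KZ k _ hgx
    rw [show (fun t : ℝ => ((1 + ‖x‖ ^ 2 + t ^ 2 : ℝ) : ℂ) ^ (-lam))
      = (fun t : ℝ => (((1 + ‖x‖^2) + t^2 : ℝ) : ℂ) ^ (-lam)) from rfl]
    rw [key, LopKZ_iterate isOpen_Ioi (by norm_num) 1 k _ hgx,
      cpowKZ_iteratedDeriv (1 + ‖x‖^2) hc1 k (-lam)]
    rw [hgBig]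
    simp only [smul_eq_mul]
  rw [hInner]
  have hmono1 : Ioi (-1:ℝ) ⊆ {u : ℝ | 0 < 1 + u} := by
    intro u hu; simp only [mem_setOf_eq, mem_Ioi] at *; linarith
  have hin : ContDiffOn ℝ (⊤:ℕ∞)
      (fun u : ℝ => ((1 + u : ℝ) : ℂ) ^ (-lam - (k:ℂ))) (Ioi (-1:ℝ)) :=
    (cpowKZ_contDiffOn 1 (-lam - (k:ℂ))).mono hmono1
  have hgBigSmooth : ContDiffOn ℝ (⊤:ℕ∞) gBig (Ioi (-1:ℝ)) := by
    rw [hgBig]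
    exact ContDiffOn.const_smul _ (ContDiffOn.const_smul _ hin)
  rw [laplacian_iterate_KZ m j gBig hgBigSmooth]
  have hval : (fun x : EuclideanSpace ℝ (Fin m) => ((LopKZ m)^[j] gBig) (‖x‖^2)) 0
      = ((LopKZ m)^[j] gBig) 0 := by norm_num
  rw [hval]
  rw [LopKZ_iterate isOpen_Ioi (by norm_num) m j gBig hgBigSmooth]
  -- pull the constants through iteratedDeriv
  have hpull : iteratedDeriv j gBig 0 =
      (((∏ i ∈ Finset.range k, (4 * (i:ℝ) + 2 * ((1:ℕ):ℝ))) : ℂ) *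
        (∏ i ∈ Finset.range k, (-lam - (i:ℂ)))) *
        ((∏ i ∈ Finset.range j, ((-lam - (k:ℂ)) - (i:ℂ)))) := by
    have hre : gBig = fun u => ((((∏ i ∈ Finset.range k, (4 * (i:ℝ) + 2 * ((1:ℕ):ℝ))) : ℂ) *
        (∏ i ∈ Finset.range k, (-lam - (i:ℂ)))) : ℂ) • ((1 + u : ℝ) : ℂ) ^ (-lam - (k:ℂ)) := by
      funext u
      rw [hgBig]
      simp only [Complex.real_smul, smul_eq_mul]
      push_cast [Complex.ofReal_prod]
      ring
    rw [hre, iteratedDeriv_const_smul_KZ isOpen_Ioi (by norm_num) hin _ j,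
      cpowKZ_iteratedDeriv 1 one_pos j (-lam - (k:ℂ))]
    simp [smul_eq_mul]
  rw [hpull]
  -- now pure algebra in ℂ
  simp only [Complex.real_smul, smul_eq_mul]
  push_cast
  -- auxiliary product identities
  have e1 : (∏ i ∈ Finset.range k, (4*(i:ℂ)+2*1))
      = ((2*k).factorial : ℂ)/(k.factorial : ℂ) := by
    rw [← prod_fact_KZ k]
    apply Finset.prod_congr rfl; intro i _; norm_num
  have e2 : (∏ i ∈ Finset.range j, (4*(i:ℂ)+2*((m:ℕ):ℂ)))
      = 2^(2*j) * ∏ i ∈ Finset.range j, (((n:ℂ)-1)/2 + i) := by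
    have hmcast : ((m:ℕ):ℂ) = (n:ℂ) - 1 := by
      rw [hm]; push_cast [Nat.cast_sub (by omega : 1 ≤ n)]; ring
    calc (∏ i ∈ Finset.range j, (4*(i:ℂ)+2*((m:ℕ):ℂ)))
        = ∏ i ∈ Finset.range j, ((2:ℂ)^2 * (((n:ℂ)-1)/2 + i)) := by
          apply Finset.prod_congr rfl; intro i _; rw [hmcast]; ring
      _ = 2^(2*j) * ∏ i ∈ Finset.range j, (((n:ℂ)-1)/2 + i) := by
          rw [Finset.prod_mul_distrib, Finset.prod_const, Finset.card_range, ← pow_mul]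
  have e3 : (∏ i ∈ Finset.range k, (-lam - (i:ℂ))) *
      (∏ i ∈ Finset.range j, ((-lam - (k:ℂ)) - (i:ℂ)))
      = ∏ i ∈ Finset.range l, (-lam - (i:ℂ)) := by
    rw [← hkj, Finset.prod_range_add]
    congr 1
    apply Finset.prod_congr rfl; intro i _; push_cast; ring
  have e4 : (∏ i ∈ Finset.range l, (-lam - (i:ℂ)))
      = ∏ i ∈ Finset.range l, (-lam - (l:ℂ) + 1 + (i:ℂ)) := by
    rw [← Finset.prod_range_reflect]
    apply Finset.prod_congr rfl
    intro i hi
    have hil : i < l := Finset.mem_range.mp hi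
    rw [Nat.cast_sub (by omega : i ≤ l - 1), Nat.cast_sub (by omega : 1 ≤ l)]
    push_cast
    ring
  rw [show (∏ x ∈ Finset.range j, (4*(x:ℂ) + 2*(m:ℂ))) *
      (((∏ x ∈ Finset.range k, (4*(x:ℂ) + 2*1)) * ∏ i ∈ Finset.range k, (-lam - (i:ℂ))) *
        ∏ i ∈ Finset.range j, (-lam - (k:ℂ) - (i:ℂ)))
    = (∏ x ∈ Finset.range j, (4*(x:ℂ)+2*(m:ℂ))) * (∏ x ∈ Finset.range k, (4*(x:ℂ)+2*1)) *
      ((∏ i ∈ Finset.range k, (-lam - (i:ℂ))) *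
        ∏ i ∈ Finset.range j, ((-lam - (k:ℂ)) - (i:ℂ))) by ring,
    e3, e4, e2, e1]
  ring
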